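/- Let N ≥ 1, let k ≥ 1 be a natural number, and let v, w : (Fin N ⊕ Fin N) → ℤ be integer vectors. Then there exists a matrix M in the integral symplectic group Sp(2N,ℤ) such that M.mulVec v is entrywise congruent to w modulo k (i.e. k divides (M.mulVec v) i − w i for every index i) if and only if gcd(v_1, …, v_{2N}, k) = gcd(w_1, …, w_{2N}, k). Thus the orbits of the symplectic action on (ℤ/kℤ)^{2N} are classified by the gcd of the entries together with k. -/

import Mathlib

open Matrix Finset

section SymplecticOrbitAux

variable {N k : ℕ}

def SpRel (N k : ℕ) (v w : (Fin N ⊕ Fin N) → ℤ) : Prop :=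
  ∃ M ∈ Matrix.symplecticGroup (Fin N) ℤ,
    ∀ i : Fin N ⊕ Fin N, (k : ℤ) ∣ (M.mulVec v i - w i)

lemma dvd_mulVec_of_dvd' (a : ℤ) (M : Matrix (Fin N ⊕ Fin N) (Fin N ⊕ Fin N) ℤ)
    {u : (Fin N ⊕ Fin N) → ℤ} (h : ∀ j, a ∣ u j) (i : Fin N ⊕ Fin N) :
    a ∣ M.mulVec u i := by
  simp only [Matrix.mulVec, dotProduct]
  exact Finset.dvd_sum fun j _ => Dvd.dvd.mul_left (h j) _

lemma sprel_gcd_dvd {v w : (Fin N ⊕ Fin N) → ℤ} (h : SpRel N k v w) :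
    Int.gcd (Finset.univ.gcd v) (k:ℤ) ∣ Int.gcd (Finset.univ.gcd w) (k:ℤ) := by
  obtain ⟨M, hM, hd⟩ := h
  set d : ℕ := Int.gcd (Finset.univ.gcd v) (k:ℤ) with hdd
  have hdv : ∀ j, (d:ℤ) ∣ v j := fun j =>
    dvd_trans (Int.gcd_dvd_left _ _) (Finset.gcd_dvd (Finset.mem_univ j))
  have hdk : (d:ℤ) ∣ (k:ℤ) := Int.gcd_dvd_right _ _
  have hdw : ∀ j, (d:ℤ) ∣ w j := by
    intro j
    have h1 : (d:ℤ) ∣ M.mulVec v j := dvd_mulVec_of_dvd' _ M hdv j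
    have h2 : (d:ℤ) ∣ (M.mulVec v j - w j) := hdk.trans (hd j)
    have h3 : w j = M.mulVec v j - (M.mulVec v j - w j) := by ring
    rw [h3]; exact dvd_sub h1 h2
  have : (d:ℤ) ∣ ((Int.gcd (Finset.univ.gcd w) (k:ℤ) : ℕ) : ℤ) :=
    Int.dvd_coe_gcd (Finset.dvd_gcd fun j _ => hdw j) hdk
  exact_mod_cast this

lemma canon_gcd (i0 : Fin N) (D : ℕ) (hD : (D:ℤ) ∣ (k:ℤ)) :
    Int.gcd (Finset.univ.gcd
      (Sum.elim (fun i => if i = i0 then (D:ℤ) else 0) 0 : (Fin N ⊕ Fin N) → ℤ)) (k:ℤ) = D := by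
  set g : ℤ := Finset.univ.gcd
    (Sum.elim (fun i => if i = i0 then (D:ℤ) else 0) 0 : (Fin N ⊕ Fin N) → ℤ) with hg
  have h1 : (D:ℤ) ∣ g := by
    apply Finset.dvd_gcd
    rintro (j | j) _
    · rcases eq_or_ne j i0 with hj | hj
      · subst hj
        simp only [Sum.elim_inl, if_true]
        exact dvd_rfl
      · simp only [Sum.elim_inl, if_neg hj]
        exact dvd_zero _
    · exact dvd_zero _
  have h2 : g ∣ (D:ℤ) := by
    have h3 := Finset.gcd_dvd (s := (Finset.univ : Finset (Fin N ⊕ Fin N)))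
      (f := (Sum.elim (fun i => if i = i0 then (D:ℤ) else 0) 0)) (Finset.mem_univ (Sum.inl i0))
    simpa using h3
  apply Nat.dvd_antisymm
  · exact_mod_cast (Int.gcd_dvd_left _ _).trans h2
  · exact_mod_cast Int.dvd_coe_gcd h1 hD






lemma SpRel.of_eq {M : Matrix (Fin N ⊕ Fin N) (Fin N ⊕ Fin N) ℤ}
    (hM : M ∈ Matrix.symplecticGroup (Fin N) ℤ) {v w : (Fin N ⊕ Fin N) → ℤ}
    (h : M.mulVec v = w) : SpRel N k v w :=
  ⟨M, hM, fun i => by simp [h]⟩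

lemma SpRel.trans {v w u : (Fin N ⊕ Fin N) → ℤ} (h1 : SpRel N k v w)
    (h2 : SpRel N k w u) : SpRel N k v u := by
  obtain ⟨M1, hM1, hd1⟩ := h1
  obtain ⟨M2, hM2, hd2⟩ := h2
  refine ⟨M2 * M1, mul_mem hM2 hM1, fun i => ?_⟩
  have key : (M2 * M1).mulVec v i - u i =
      M2.mulVec (fun j => M1.mulVec v j - w j) i + (M2.mulVec w i - u i) := by
    have : (M2 * M1).mulVec v = M2.mulVec (M1.mulVec v) := (mulVec_mulVec _ _ _).symm
    rw [this]
    have : M2.mulVec (fun j => M1.mulVec v j - w j) =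
        M2.mulVec (M1.mulVec v) - M2.mulVec w := by
      rw [← Matrix.mulVec_sub]; rfl
    rw [this]
    simp [Pi.sub_apply]
  rw [key]
  exact dvd_add (dvd_mulVec_of_dvd' _ M2 hd1 i) (hd2 i)

lemma SpRel.symm {v w : (Fin N ⊕ Fin N) → ℤ} (h : SpRel N k v w) : SpRel N k w v := by
  obtain ⟨M, hM, hd⟩ := h
  set Ms : Matrix.symplecticGroup (Fin N) ℤ := ⟨M, hM⟩ with hMs
  set M' : Matrix (Fin N ⊕ Fin N) (Fin N ⊕ Fin N) ℤ := (Ms⁻¹ : Matrix.symplecticGroup (Fin N) ℤ).val with hM'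
  refine ⟨M', (Ms⁻¹).2, fun i => ?_⟩
  have hinv : M' * M = 1 := by
    have h1 : Ms⁻¹ * Ms = 1 := inv_mul_cancel Ms
    have h2 := congrArg (Subtype.val) h1
    rw [Submonoid.coe_mul] at h2
    exact h2
  have hv : M'.mulVec (M.mulVec v) = v := by
    rw [mulVec_mulVec, hinv, one_mulVec]
  have key : M'.mulVec w - v = M'.mulVec (w - M.mulVec v) := by
    rw [Matrix.mulVec_sub, hv]
  have keyi : M'.mulVec w i - v i = M'.mulVec (w - M.mulVec v) i := by
    have := congrFun key i
    simpa using this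
  rw [keyi]
  exact dvd_mulVec_of_dvd' _ M' (fun j => by
    have := dvd_neg.mpr (hd j)
    simpa using this) i




/-- Membership criterion for block matrices in the symplectic group. -/
lemma spblocks_mem (A B C D : Matrix (Fin N) (Fin N) ℤ)
    (h1 : A * Bᵀ = B * Aᵀ) (h2 : C * Dᵀ = D * Cᵀ)
    (h3 : A * Dᵀ - B * Cᵀ = 1) :
    fromBlocks A B C D ∈ Matrix.symplecticGroup (Fin N) ℤ := by
  have h4 : D * Aᵀ - C * Bᵀ = 1 := by
    have := congrArg Matrix.transpose h3
    simpa [Matrix.transpose_sub, Matrix.transpose_mul] using this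
  have h3' : A * Dᵀ = 1 + B * Cᵀ := by rw [← h3]; abel
  have h4' : D * Aᵀ = 1 + C * Bᵀ := by rw [← h4]; abel
  rw [SymplecticGroup.mem_iff, Matrix.J, fromBlocks_transpose,
    fromBlocks_multiply, fromBlocks_multiply]
  simp only [Matrix.mul_zero, Matrix.zero_mul, Matrix.mul_one, Matrix.one_mul,
    Matrix.mul_neg, Matrix.neg_mul, add_zero, zero_add]
  rw [fromBlocks_inj]
  exact ⟨by rw [h1]; abel, by rw [h3']; abel, by rw [h4']; abel, by rw [h2]; abel⟩

/-- The "diagonal SL2 in each pair" symplectic matrix. -/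
lemma sp_diag4 (a b c d : Fin N → ℤ) (h : ∀ i, a i * d i - b i * c i = 1) :
    fromBlocks (diagonal a) (diagonal b) (diagonal c) (diagonal d)
      ∈ Matrix.symplecticGroup (Fin N) ℤ ∧
    ∀ v : (Fin N ⊕ Fin N) → ℤ,
      (fromBlocks (diagonal a) (diagonal b) (diagonal c) (diagonal d)).mulVec v =
        Sum.elim (fun i => a i * v (Sum.inl i) + b i * v (Sum.inr i))
          (fun i => c i * v (Sum.inl i) + d i * v (Sum.inr i)) := by
  constructor
  · apply spblocks_mem
    · simp [diagonal_transpose, diagonal_mul_diagonal, mul_comm]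
    · simp [diagonal_transpose, diagonal_mul_diagonal, mul_comm]
    · rw [diagonal_transpose, diagonal_transpose, diagonal_mul_diagonal,
        diagonal_mul_diagonal, diagonal_sub]
      rw [show (fun i => a i * d i - b i * c i) = fun _ => (1:ℤ) from funext h]
      simp [diagonal_one]
  · intro v
    rw [fromBlocks_mulVec]
    funext i
    cases i <;> simp [mulVec_diagonal]

/-- Lower-triangular symplectic transvection block matrix. -/
lemma sp_lower (C : Matrix (Fin N) (Fin N) ℤ) (hC : Cᵀ = C) :
    fromBlocks 1 0 C 1 ∈ Matrix.symplecticGroup (Fin N) ℤ ∧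
    ∀ v : (Fin N ⊕ Fin N) → ℤ,
      (fromBlocks (1 : Matrix (Fin N) (Fin N) ℤ) 0 C 1).mulVec v =
        Sum.elim (fun i => v (Sum.inl i))
          (fun i => C.mulVec (v ∘ Sum.inl) i + v (Sum.inr i)) := by
  constructor
  · apply spblocks_mem <;> simp [hC]
  · intro v
    rw [fromBlocks_mulVec]
    funext i
    cases i <;> simp [mulVec]

/-- GL(N) block-diagonal symplectic matrix from a square-zero matrix. -/
lemma sp_gl (P : Matrix (Fin N) (Fin N) ℤ) (hP : P * P = 0) :
    fromBlocks (1 - P) 0 0 (1 + Pᵀ) ∈ Matrix.symplecticGroup (Fin N) ℤ ∧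
    ∀ v : (Fin N ⊕ Fin N) → ℤ,
      (fromBlocks (1 - P) (0 : Matrix (Fin N) (Fin N) ℤ) 0 (1 + Pᵀ)).mulVec v =
        Sum.elim ((1 - P).mulVec (v ∘ Sum.inl)) ((1 + Pᵀ).mulVec (v ∘ Sum.inr)) := by
  constructor
  · apply spblocks_mem
    · simp
    · simp
    · have : (1 - P) * (1 + Pᵀ)ᵀ = 1 - P * P := by
        rw [Matrix.transpose_add, Matrix.transpose_one, Matrix.transpose_transpose]
        noncomm_ring
      rw [this, hP, sub_zero]
      simp
  · intro v
    rw [fromBlocks_mulVec]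
    funext i
    cases i <;> simp




/-- Bezout over a finite set in `ℤ`. -/
lemma finset_gcd_bezout {ι : Type*} [DecidableEq ι] (s : Finset ι) (f : ι → ℤ) :
    ∃ c : ι → ℤ, (s.gcd f : ℤ) = ∑ i ∈ s, c i * f i := by
  induction s using Finset.induction_on with
  | empty => exact ⟨0, by simp⟩
  | @insert a s ha ih =>
    obtain ⟨c, hc⟩ := ih
    set A := Int.gcdA (f a) (s.gcd f) with hA
    set B := Int.gcdB (f a) (s.gcd f) with hB
    refine ⟨fun i => if i = a then A else B * c i, ?_⟩
    have hs : (∑ i ∈ s, (if i = a then A else B * c i) * f i) = ∑ i ∈ s, B * (c i * f i) :=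
      Finset.sum_congr rfl (fun i hi => by
        have hia : i ≠ a := fun h => ha (h ▸ hi)
        rw [if_neg hia]; ring)
    rw [Finset.gcd_insert, Finset.sum_insert ha]
    simp only [if_true]
    rw [hs, ← Finset.mul_sum, ← hc,
      ← Int.coe_gcd, Int.gcd_eq_gcd_ab, ← hA, ← hB]
    ring

/-- An SL₂ matrix bringing `(x, y)` to `(gcd x y, 0)`. -/
lemma sl2_gcd (x y : ℤ) : ∃ a b c d : ℤ, a * d - b * c = 1 ∧
    a * x + b * y = (Int.gcd x y : ℤ) ∧ c * x + d * y = 0 := by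
  by_cases h : x = 0 ∧ y = 0
  · exact ⟨1, 0, 0, 1, by ring, by simp [h.1, h.2], by simp [h.1, h.2]⟩
  · set g : ℤ := (Int.gcd x y : ℤ) with hg
    have hg0 : g ≠ 0 := by
      simp only [hg]
      intro hgg
      exact h (Int.gcd_eq_zero_iff.mp (by exact_mod_cast hgg))
    obtain ⟨x', hx'⟩ : g ∣ x := Int.gcd_dvd_left _ _
    obtain ⟨y', hy'⟩ : g ∣ y := Int.gcd_dvd_right _ _
    set A : ℤ := Int.gcdA x y with hA
    set B : ℤ := Int.gcdB x y with hB
    have hbez : g = x * A + y * B := Int.gcd_eq_gcd_ab x y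
    have hone : x' * A + y' * B = 1 := by
      apply mul_left_cancel₀ hg0
      rw [mul_one]
      calc g * (x' * A + y' * B) = x * A + y * B := by rw [hx', hy']; ring
        _ = g := hbez.symm
    refine ⟨A, B, -y', x', ?_, ?_, ?_⟩
    · linear_combination hone
    · rw [hbez]; ring
    · rw [hx', hy']; ring


/-- A symplectic matrix taking `v` to the vector of pairwise gcds. -/
lemma step_pairgcd (v : (Fin N ⊕ Fin N) → ℤ) :
    ∃ M ∈ Matrix.symplecticGroup (Fin N) ℤ,
      M.mulVec v = Sum.elim
        (fun i => (Int.gcd (v (Sum.inl i)) (v (Sum.inr i)) : ℤ)) 0 := by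
  choose a b c d h1 h2 h3 using fun i => sl2_gcd (v (Sum.inl i)) (v (Sum.inr i))
  obtain ⟨hmem, hact⟩ := sp_diag4 a b c d h1
  refine ⟨_, hmem, ?_⟩
  rw [hact v]
  funext i
  cases i with
  | inl i => simpa using h2 i
  | inr i => simpa using h3 i
/-- Reduction of any vector to a canonical form modulo `k`. -/
lemma sp_reduce (hN : 1 ≤ N) (hk : 1 ≤ k) (v : (Fin N ⊕ Fin N) → ℤ) :
    ∃ D : ℕ, (D:ℤ) ∣ (k:ℤ) ∧ SpRel N k v
      (Sum.elim (fun i => if i = (⟨0, hN⟩ : Fin N) then (D:ℤ) else 0) 0) := by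
  classical
  set i0 : Fin N := ⟨0, hN⟩ with hi0
  -- Step 1 : per-pair gcd
  obtain ⟨M1, hM1, hact1⟩ := step_pairgcd v
  set g : Fin N → ℤ := fun i => (Int.gcd (v (Sum.inl i)) (v (Sum.inr i)) : ℤ) with hgdef
  have R1 : SpRel N k v (Sum.elim g 0) := SpRel.of_eq hM1 hact1
  -- Step 2 : gather the Bezout combination into position i0
  obtain ⟨c, hc⟩ := finset_gcd_bezout Finset.univ g
  set G : ℤ := Finset.univ.gcd g with hG
  set Cmat : Matrix (Fin N) (Fin N) ℤ :=
    Matrix.of (fun i j => if i = i0 then c j else if j = i0 then c i else 0) with hCmat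
  have hCsym : Cmatᵀ = Cmat := by
    funext i j
    simp only [hCmat, Matrix.transpose_apply, Matrix.of_apply]
    by_cases hi : i = i0 <;> by_cases hj : j = i0 <;> simp [hi, hj]
  obtain ⟨hM2, hact2⟩ := sp_lower Cmat hCsym
  set y2 : Fin N → ℤ := fun i => Cmat.mulVec g i with hy2def
  have hy2i0 : y2 i0 = G := by
    simp only [hy2def, Matrix.mulVec, dotProduct, hCmat, Matrix.of_apply, if_true]
    exact hc.symm
  have hy2ne : ∀ i, i ≠ i0 → y2 i = c i * g i0 := by
    intro i hi
    simp only [hy2def, Matrix.mulVec, dotProduct, hCmat, Matrix.of_apply, if_neg hi]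
    rw [Finset.sum_eq_single i0]
    · rw [if_pos rfl]
    · intro j _ hj; rw [if_neg hj, zero_mul]
    · intro hmem; exact absurd (Finset.mem_univ i0) hmem
  have R2 : SpRel N k (Sum.elim g 0) (Sum.elim g y2) := by
    apply SpRel.of_eq hM2
    rw [hact2]
    funext i
    cases i with
    | inl i => simp
    | inr i => simp [hy2def]
  -- Step 3 : per-pair gcd again
  obtain ⟨M3, hM3, hact3⟩ := step_pairgcd (Sum.elim g y2)
  set t : Fin N → ℤ := fun i => (Int.gcd (g i) (y2 i) : ℤ) with htdef
  have R3 : SpRel N k (Sum.elim g y2) (Sum.elim t 0) := by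
    apply SpRel.of_eq hM3
    rw [hact3]
    funext i
    cases i <;> simp [htdef]
  set G' : ℤ := t i0 with hG'
  have hGt : ∀ i, G ∣ t i := by
    intro i
    apply Int.dvd_coe_gcd
    · exact Finset.gcd_dvd (Finset.mem_univ i)
    · by_cases hi : i = i0
      · rw [hi, hy2i0]
      · rw [hy2ne i hi]
        exact Dvd.dvd.mul_left (Finset.gcd_dvd (Finset.mem_univ i0)) _
  have hG'dvd : ∀ i, G' ∣ t i := by
    intro i
    have h1 : G' ∣ G := by
      rw [hG', htdef]
      simp only
      rw [← hy2i0]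
      exact Int.gcd_dvd_right _ _
    exact h1.trans (hGt i)
  -- Step 4 : clear the other positions using G' at i0
  set u : Fin N → ℤ := fun i => if i = i0 then 0 else t i / G' with hu
  set P : Matrix (Fin N) (Fin N) ℤ :=
    Matrix.of (fun i j => if j = i0 then u i else 0) with hP
  have hPP : P * P = 0 := by
    funext i j
    simp only [Matrix.mul_apply, hP, Matrix.of_apply, Matrix.zero_apply]
    rw [Finset.sum_eq_single i0]
    · simp [hu]
    · intro m _ hm; rw [if_neg hm, zero_mul]
    · intro hmem; exact absurd (Finset.mem_univ i0) hmem
  obtain ⟨hM4, hact4⟩ := sp_gl P hPP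
  have R4 : SpRel N k (Sum.elim t 0)
      (Sum.elim (fun i => if i = i0 then G' else 0) 0) := by
    apply SpRel.of_eq hM4
    rw [hact4]
    funext i
    cases i with
    | inl i =>
      simp only [Sum.elim_inl, Matrix.sub_mulVec, Matrix.one_mulVec, Pi.sub_apply]
      have hPt : P.mulVec ((Sum.elim t (0 : Fin N → ℤ)) ∘ Sum.inl) i = u i * t i0 := by
        simp only [Matrix.mulVec, dotProduct, hP, Matrix.of_apply]
        rw [Finset.sum_eq_single i0]
        · rw [if_pos rfl]; rfl
        · intro m _ hm; rw [if_neg hm, zero_mul]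
        · intro hmem; exact absurd (Finset.mem_univ i0) hmem
      rw [hPt]
      by_cases hi : i = i0
      · subst hi
        simp [hu]
        exact hG'.symm
      · simp only [hu, if_neg hi, Function.comp_apply, Sum.elim_inl]
        rw [← hG', Int.ediv_mul_cancel (hG'dvd i)]
        exact sub_self _
    | inr i =>
      have hz : (Sum.elim t (0 : Fin N → ℤ)) ∘ Sum.inr = 0 := by funext j; simp
      simp [hz]
  -- Step 5 : adjust modulo k
  set d : ℕ := Int.gcd G' (k:ℤ) with hd
  have hk0 : (k:ℤ) ≠ 0 := by exact_mod_cast Nat.one_le_iff_ne_zero.mp hk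
  have hd0 : d ≠ 0 := by
    intro h0
    exact hk0 (Int.gcd_eq_zero_iff.mp (hd ▸ h0)).2
  have hdz0 : (d:ℤ) ≠ 0 := by exact_mod_cast hd0
  have hdG : (d:ℤ) ∣ G' := Int.gcd_dvd_left _ _
  have hdk : (d:ℤ) ∣ (k:ℤ) := Int.gcd_dvd_right _ _
  set α : ℤ := G' / (d:ℤ) with hα
  set κ : ℤ := (k:ℤ) / (d:ℤ) with hκ
  have hGα : G' = (d:ℤ) * α := (Int.mul_ediv_cancel' hdG).symm
  have hkκ : (k:ℤ) = (d:ℤ) * κ := (Int.mul_ediv_cancel' hdk).symm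
  have hcop : Int.gcd α κ = 1 := by
    apply Int.gcd_div_gcd_div_gcd
    rw [← hd]
    exact Nat.pos_of_ne_zero hd0
  have hbez : (1:ℤ) = α * Int.gcdA α κ + κ * Int.gcdB α κ := by
    have h1 := Int.gcd_eq_gcd_ab α κ
    rw [hcop] at h1
    exact_mod_cast h1
  set A' : ℤ := Int.gcdA α κ with hA'
  set B' : ℤ := Int.gcdB α κ with hB'
  set aa : Fin N → ℤ := fun i => if i = i0 then A' else 1 with haa
  set bb : Fin N → ℤ := fun i => if i = i0 then -B' else 0 with hbb
  set cc : Fin N → ℤ := fun i => if i = i0 then κ else 0 with hcc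
  set dd : Fin N → ℤ := fun i => if i = i0 then α else 1 with hdd
  have hdet : ∀ i, aa i * dd i - bb i * cc i = 1 := by
    intro i
    by_cases hi : i = i0
    · simp only [haa, hbb, hcc, hdd, if_pos hi]
      linear_combination -hbez
    · simp [haa, hbb, hcc, hdd, if_neg hi]
  obtain ⟨hM5, hact5⟩ := sp_diag4 aa bb cc dd hdet
  have R5 : SpRel N k (Sum.elim (fun i => if i = i0 then G' else 0) 0)
      (Sum.elim (fun i => if i = i0 then A' * G' else 0)
        (fun i => if i = i0 then κ * G' else 0)) := by
    apply SpRel.of_eq hM5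
    rw [hact5]
    funext i
    cases i with
    | inl i =>
      by_cases hi : i = i0 <;>
        simp [haa, hbb, hi]
    | inr i =>
      by_cases hi : i = i0 <;>
        simp [hcc, hdd, hi]
  have R6 : SpRel N k
      (Sum.elim (fun i => if i = i0 then A' * G' else 0)
        (fun i => if i = i0 then κ * G' else 0))
      (Sum.elim (fun i => if i = i0 then (d:ℤ) else 0) 0) := by
    refine ⟨1, one_mem _, fun i => ?_⟩
    rw [Matrix.one_mulVec]
    cases i with
    | inl i =>
      by_cases hi : i = i0
      · subst hi
        simp only [Sum.elim_inl, if_true]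
        refine ⟨-B', ?_⟩
        rw [hGα, hkκ]
        linear_combination (-(d:ℤ)) * hbez
      · simp [hi]
    | inr i =>
      by_cases hi : i = i0
      · subst hi
        simp only [Sum.elim_inr, if_true, Pi.zero_apply, sub_zero]
        refine ⟨α, ?_⟩
        rw [hGα, hkκ]
        ring
      · simp [hi]
  exact ⟨d, hdk, R1.trans (R2.trans (R3.trans (R4.trans (R5.trans R6))))⟩

end SymplecticOrbitAux

/-- Two vectors of `(ℤ/kℤ)^{2N}` lie in the same orbit of the symplectic group
`Sp(2N,ℤ)` iff `gcd(v₁,…,v_{2N},k) = gcd(w₁,…,w_{2N},k)`, where the action on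
integer vectors is by matrix-vector multiplication followed by reduction mod `k`. -/
theorem symplectic_orbit_mod_k_iff_gcd {N : ℕ} (hN : 1 ≤ N)
    (k : ℕ) (hk : 1 ≤ k) (v w : (Fin N ⊕ Fin N) → ℤ) :
    (∃ M ∈ Matrix.symplecticGroup (Fin N) ℤ,
        ∀ i : Fin N ⊕ Fin N, (k : ℤ) ∣ (M.mulVec v i - w i)) ↔
      Int.gcd (Finset.univ.gcd v) (k : ℤ) = Int.gcd (Finset.univ.gcd w) (k : ℤ) := by
  constructor
  · intro h
    exact Nat.dvd_antisymm (sprel_gcd_dvd h) (sprel_gcd_dvd (SpRel.symm h))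
  · intro hgcd
    obtain ⟨Dv, hDv, Rv⟩ := sp_reduce hN hk v
    obtain ⟨Dw, hDw, Rw⟩ := sp_reduce hN hk w
    have h1 : Int.gcd (Finset.univ.gcd v) (k:ℤ) = Dv :=
      (Nat.dvd_antisymm (sprel_gcd_dvd Rv) (sprel_gcd_dvd (SpRel.symm Rv))).trans
        (canon_gcd ⟨0, hN⟩ Dv hDv)
    have h2 : Int.gcd (Finset.univ.gcd w) (k:ℤ) = Dw :=
      (Nat.dvd_antisymm (sprel_gcd_dvd Rw) (sprel_gcd_dvd (SpRel.symm Rw))).trans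
        (canon_gcd ⟨0, hN⟩ Dw hDw)
    have hDD : Dv = Dw := by rw [← h1, ← h2, hgcd]
    subst hDD
    exact Rv.trans (SpRel.symm Rw)
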